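/- Fix an integer k ≥ 1. For a real number R ≥ 1 let B(R) denote the set of integer (k+1)-tuples (a₁,…,a_k,b) with |aᵢ| ≤ R for all i, 0 < b ≤ R, and gcd(a₁,…,a_k,b) = 1. Then card B(R) is asymptotic to 2^k R^{k+1}/ζ(k+1) as R → ∞; that is, card B(R) · ζ(k+1) / (2^k R^{k+1}) tends to 1 as R → ∞. -/

import Mathlib

/-- `Bset k R` is the set of integer `(k+1)`-tuples `(a₁, …, a_k, b)` with `|aᵢ| ≤ R`
for all `i`, `0 < b ≤ R`, and `gcd(a₁, …, a_k, b) = 1`. -/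
def Bset (k : ℕ) (R : ℝ) : Set ((Fin k → ℤ) × ℤ) :=
  {p | (∀ i, (|p.1 i| : ℝ) ≤ R) ∧ 0 < p.2 ∧ (p.2 : ℝ) ≤ R ∧
    gcd (Finset.univ.gcd p.1) p.2 = 1}

/-- The value `ζ(k)` of the Riemann zeta function at an integer `k ≥ 2`,
as the real series `∑ 1/mᵏ`. -/
noncomputable def zetaVal (k : ℕ) : ℝ := ∑' m : ℕ, 1 / (m + 1 : ℝ) ^ k

section Aux
open Finset

lemma cast_nat_div (m n : ℕ) : ((m / n : ℕ) : ℤ) = (m:ℤ)/(n:ℤ) := rfl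

lemma filter_Icc_dvd_eq_image (d n : ℕ) (hd : 0 < d) :
    ((Finset.Icc (1:ℤ) n).filter (fun x => (d:ℤ) ∣ x)) =
      (Finset.Icc (1:ℤ) ((n / d : ℕ) : ℤ)).image (fun j => (d:ℤ) * j) := by
  have hd' : (0:ℤ) < d := by exact_mod_cast hd
  ext x
  simp only [mem_filter, mem_Icc, mem_image]
  constructor
  · rintro ⟨⟨h1, h2⟩, j, rfl⟩
    refine ⟨j, ⟨?_, ?_⟩, rfl⟩
    · nlinarith
    · rw [cast_nat_div, Int.le_ediv_iff_mul_le hd']; nlinarith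
  · rintro ⟨j, ⟨h1, h2⟩, rfl⟩
    rw [cast_nat_div, Int.le_ediv_iff_mul_le hd'] at h2
    exact ⟨⟨by nlinarith, by nlinarith⟩, j, rfl⟩

lemma card_filter_Icc_dvd (d n : ℕ) (hd : 0 < d) :
    ((Finset.Icc (1:ℤ) n).filter (fun x => (d:ℤ) ∣ x)).card = n / d := by
  rw [filter_Icc_dvd_eq_image d n hd,
    Finset.card_image_of_injective _ (mul_right_injective₀ (by exact_mod_cast hd.ne')),
    Int.card_Icc]
  generalize n / d = q
  omega

lemma filter_Icc_dvd_eq_image' (d n : ℕ) (hd : 0 < d) :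
    ((Finset.Icc (-(n:ℤ)) n).filter (fun x => (d:ℤ) ∣ x)) =
      (Finset.Icc (-((n / d : ℕ) : ℤ)) ((n / d : ℕ) : ℤ)).image (fun j => (d:ℤ) * j) := by
  have hd' : (0:ℤ) < d := by exact_mod_cast hd
  ext x
  simp only [mem_filter, mem_Icc, mem_image]
  constructor
  · rintro ⟨⟨h1, h2⟩, j, rfl⟩
    refine ⟨j, ⟨?_, ?_⟩, rfl⟩
    · rw [neg_le, cast_nat_div, Int.le_ediv_iff_mul_le hd']; nlinarith
    · rw [cast_nat_div, Int.le_ediv_iff_mul_le hd']; nlinarith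
  · rintro ⟨j, ⟨h1, h2⟩, rfl⟩
    rw [neg_le, cast_nat_div, Int.le_ediv_iff_mul_le hd'] at h1
    rw [cast_nat_div, Int.le_ediv_iff_mul_le hd'] at h2
    exact ⟨⟨by nlinarith, by nlinarith⟩, j, rfl⟩

lemma card_filter_Icc_dvd' (d n : ℕ) (hd : 0 < d) :
    ((Finset.Icc (-(n:ℤ)) n).filter (fun x => (d:ℤ) ∣ x)).card = 2 * (n / d) + 1 := by
  rw [filter_Icc_dvd_eq_image' d n hd,
    Finset.card_image_of_injective _ (mul_right_injective₀ (by exact_mod_cast hd.ne')),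
    Int.card_Icc]
  generalize n / d = q
  omega


noncomputable def mybox (k n : ℕ) : Finset ((Fin k → ℤ) × ℤ) :=
  (Fintype.piFinset fun _ : Fin k => Finset.Icc (-(n:ℤ)) (n:ℤ)) ×ˢ Finset.Icc 1 (n:ℤ)

lemma card_box_dvd (k n d : ℕ) (hd : 0 < d) :
    ((mybox k n).filter (fun p => (∀ i, (d:ℤ) ∣ p.1 i) ∧ (d:ℤ) ∣ p.2)).card
      = (2 * (n / d) + 1) ^ k * (n / d) := by
  unfold mybox
  rw [Finset.filter_product (fun a : Fin k → ℤ => ∀ i, (d:ℤ) ∣ a i) (fun b : ℤ => (d:ℤ) ∣ b), Finset.card_product]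
  congr 1
  · have h : (Fintype.piFinset fun _ : Fin k => Finset.Icc (-(n:ℤ)) (n:ℤ)).filter
        (fun f => ∀ i, (d:ℤ) ∣ f i)
        = Fintype.piFinset fun _ : Fin k =>
            (Finset.Icc (-(n:ℤ)) (n:ℤ)).filter (fun x => (d:ℤ) ∣ x) := by
      ext f
      simp only [Finset.mem_filter, Fintype.mem_piFinset]
      exact ⟨fun ⟨h1, h2⟩ i => ⟨h1 i, h2 i⟩, fun h => ⟨fun i => (h i).1, fun i => (h i).2⟩⟩
    rw [h, Fintype.card_piFinset]
    simp [card_filter_Icc_dvd' d n hd]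
  · exact card_filter_Icc_dvd d n hd

open ArithmeticFunction ArithmeticFunction.Moebius ArithmeticFunction.zeta in
lemma cnt_eq (k n : ℕ) :
    ((((mybox k n).filter
        (fun p => GCDMonoid.gcd (Finset.univ.gcd p.1) p.2 = 1)).card : ℤ))
      = ∑ d ∈ Finset.Icc 1 n, μ d * (((2 * (n / d) + 1) ^ k * (n / d) : ℕ) : ℤ) := by
  have key : ∀ p ∈ mybox k n,
      (if GCDMonoid.gcd (Finset.univ.gcd p.1) p.2 = 1 then (1:ℤ) else 0)
        = ∑ d ∈ Finset.Icc 1 n,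
            if (d:ℤ) ∣ GCDMonoid.gcd (Finset.univ.gcd p.1) p.2 then (μ d : ℤ) else 0 := by
    intro p hp
    set g : ℕ := Int.gcd (Finset.univ.gcd p.1) p.2 with hg
    have hcoe : (g : ℤ) = GCDMonoid.gcd (Finset.univ.gcd p.1) p.2 := Int.coe_gcd _ _
    have hp2 : 1 ≤ p.2 ∧ p.2 ≤ (n:ℤ) := by
      have := (Finset.mem_product.mp hp).2
      simpa [Finset.mem_Icc] using this
    have hgne : g ≠ 0 := by
      intro h0
      have : p.2 = 0 := (Int.gcd_eq_zero_iff.mp (hg ▸ h0)).2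
      omega
    have hgle : g ≤ n := by
      have hdvd : (g:ℤ) ∣ p.2 := hcoe ▸ gcd_dvd_right _ _
      have := Int.le_of_dvd (by omega) hdvd
      omega
    have hdiv : ∀ d : ℕ, ((d:ℤ) ∣ GCDMonoid.gcd (Finset.univ.gcd p.1) p.2 ↔ d ∣ g) := by
      intro d
      rw [← hcoe, Int.natCast_dvd_natCast]
    have hdivisors : g.divisors = (Finset.Icc 1 n).filter (fun d => d ∣ g) := by
      ext d
      simp only [Nat.mem_divisors, Finset.mem_filter, Finset.mem_Icc]
      constructor
      · rintro ⟨h1, -⟩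
        refine ⟨⟨?_, le_trans (Nat.le_of_dvd (Nat.pos_of_ne_zero hgne) h1) hgle⟩, h1⟩
        rcases Nat.eq_zero_or_pos d with rfl | h
        · exact absurd (Nat.eq_zero_of_zero_dvd h1) hgne
        · exact h
      · rintro ⟨-, h⟩; exact ⟨h, hgne⟩
    have h1 : (if GCDMonoid.gcd (Finset.univ.gcd p.1) p.2 = 1 then (1:ℤ) else 0)
        = if g = 1 then (1:ℤ) else 0 := by
      congr 1
      simp only [eq_iff_iff]
      constructor
      · intro h; exact_mod_cast hcoe.trans h
      · intro h; rw [← hcoe, h]; norm_num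
    rw [h1]
    have h2 : (if g = 1 then (1:ℤ) else 0) = ∑ d ∈ g.divisors, (μ d : ℤ) := by
      have h3 := (ArithmeticFunction.coe_mul_zeta_apply (f := μ) (x := g)).symm
      rw [ArithmeticFunction.moebius_mul_coe_zeta] at h3
      rw [h3, ArithmeticFunction.one_apply]
    rw [h2, hdivisors, Finset.sum_filter]
    exact Finset.sum_congr rfl fun d _ => by simp only [hdiv d]
  rw [← Finset.sum_boole, Finset.sum_congr rfl key, Finset.sum_comm]
  refine Finset.sum_congr rfl fun d hd => ?_
  have hd1 : 0 < d := by simp only [Finset.mem_Icc] at hd; omega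
  have hite : ∀ p ∈ mybox k n,
      (if (d:ℤ) ∣ GCDMonoid.gcd (Finset.univ.gcd p.1) p.2 then (μ d : ℤ) else 0)
        = if (∀ i, (d:ℤ) ∣ p.1 i) ∧ (d:ℤ) ∣ p.2 then (μ d : ℤ) else 0 := by
    intro p hp
    have : ((d:ℤ) ∣ GCDMonoid.gcd (Finset.univ.gcd p.1) p.2)
        ↔ ((∀ i, (d:ℤ) ∣ p.1 i) ∧ (d:ℤ) ∣ p.2) := by
      rw [_root_.dvd_gcd_iff, Finset.dvd_gcd_iff]
      simp
    simp only [this]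
  rw [Finset.sum_congr rfl hite, ← Finset.sum_filter, Finset.sum_const,
    card_box_dvd k n d hd1, nsmul_eq_mul, mul_comm]

end Aux


open ArithmeticFunction ArithmeticFunction.Moebius ArithmeticFunction.zeta in
lemma moebius_tsum_mul_zeta (k : ℕ) (hk : 1 ≤ k) :
    (∑' d : ℕ, ((μ (d + 1) : ℤ) : ℝ) / (d + 1 : ℝ) ^ (k + 1)) * zetaVal (k + 1) = 1 := by
  set s : ℂ := ((k + 1 : ℕ) : ℂ) with hs
  have hsre : 1 < s.re := by
    rw [hs]
    simp only [Complex.natCast_re]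
    exact_mod_cast by omega
  have hμ : LSeriesSummable (fun n => (μ n : ℂ)) s :=
    LSeriesSummable_moebius_iff.mpr hsre
  have hζ : LSeriesSummable (fun n => (ζ n : ℂ)) s :=
    LSeriesSummable_zeta_iff.mpr hsre
  have hterm : ∀ (f : ℕ → ℂ) (n : ℕ), LSeries.term f s (n + 1) = f (n + 1) / ((n + 1 : ℕ) : ℂ) ^ (k + 1) := by
    intro f n
    rw [LSeries.term_of_ne_zero (Nat.succ_ne_zero n), hs, Complex.cpow_natCast]
  have hμL : LSeries (fun n => (μ n : ℂ)) s
      = ((∑' d : ℕ, ((μ (d + 1) : ℤ) : ℝ) / (d + 1 : ℝ) ^ (k + 1) : ℝ) : ℂ) := by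
    rw [LSeries, Summable.tsum_eq_zero_add hμ, LSeries.term_zero, zero_add, Complex.ofReal_tsum]
    refine tsum_congr fun n => ?_
    rw [hterm]
    push_cast
    ring
  have hζL : LSeries (fun n => (ζ n : ℂ)) s = ((zetaVal (k + 1) : ℝ) : ℂ) := by
    rw [LSeries, Summable.tsum_eq_zero_add hζ, LSeries.term_zero, zero_add, zetaVal,
      Complex.ofReal_tsum]
    refine tsum_congr fun n => ?_
    rw [hterm, zeta_apply_ne (Nat.succ_ne_zero n)]
    push_cast
    ring
  have := ArithmeticFunction.LSeries_zeta_mul_Lseries_moebius hsre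
  rw [hμL, hζL] at this
  rw [mul_comm]
  exact_mod_cast this


lemma Bset_coe (k : ℕ) (R : ℝ) (hR : 1 ≤ R) :
    Bset k R = ↑((mybox k ⌊R⌋₊).filter
      (fun p => GCDMonoid.gcd (Finset.univ.gcd p.1) p.2 = 1)) := by
  have hR0 : (0:ℝ) ≤ R := by linarith
  have hfl : ((⌊R⌋₊:ℤ)) = ⌊R⌋ := by
    rw [← Int.floor_toNat, Int.toNat_of_nonneg (Int.floor_nonneg.2 hR0)]
  have hb : ∀ b : ℤ, ((b : ℝ) ≤ R ↔ b ≤ (⌊R⌋₊:ℤ)) := by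
    intro b; rw [hfl, Int.le_floor]
  have habs : ∀ a : ℤ, (|(a : ℝ)| ≤ R ↔ (-(⌊R⌋₊:ℤ) ≤ a ∧ a ≤ (⌊R⌋₊:ℤ))) := by
    intro a
    rw [← abs_le, ← Int.cast_abs, hb]
  ext p
  simp only [Bset, Set.mem_setOf_eq, Finset.coe_filter, Finset.mem_coe, Finset.mem_filter,
    mybox, Finset.mem_product, Fintype.mem_piFinset, Finset.mem_Icc]
  constructor
  · rintro ⟨ha, hb1, hb2, hg⟩
    exact ⟨⟨fun i => (habs _).mp (ha i), by omega, ((hb _).mp hb2)⟩, hg⟩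
  · rintro ⟨⟨ha, hb1, hb2⟩, hg⟩
    exact ⟨fun i => (habs _).mpr (ha i), by omega, (hb _).mpr hb2, hg⟩

open ArithmeticFunction ArithmeticFunction.Moebius ArithmeticFunction.zeta in
lemma card_Bset_eq (k : ℕ) (R : ℝ) (hR : 1 ≤ R) :
    ((Nat.card (Bset k R) : ℤ))
      = ∑ d ∈ Finset.Icc 1 ⌊R⌋₊,
          μ d * (((2 * (⌊R⌋₊ / d) + 1) ^ k * (⌊R⌋₊ / d) : ℕ) : ℤ) := by
  rw [← cnt_eq k ⌊R⌋₊]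
  congr 1
  rw [Nat.card_coe_set_eq, Bset_coe k R hR, Set.ncard_coe_finset]
open Filter in
lemma phi_tendsto (c : ℕ) (hc : 0 < c) :
    Filter.Tendsto (fun R : ℝ => ((⌊R⌋₊ / c : ℕ) : ℝ) / R) Filter.atTop
      (nhds (1 / (c:ℝ))) := by
  have hc' : (0:ℝ) < c := by exact_mod_cast hc
  have hlow : Filter.Tendsto (fun R : ℝ => 1/(c:ℝ) - 1/R) Filter.atTop (nhds (1/(c:ℝ))) := by
    have h0 : Filter.Tendsto (fun R : ℝ => 1/R) Filter.atTop (nhds 0) := by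
      simpa [one_div] using tendsto_inv_atTop_zero
    simpa using tendsto_const_nhds.sub h0
  refine tendsto_of_tendsto_of_tendsto_of_le_of_le' hlow tendsto_const_nhds ?_ ?_
  · filter_upwards [eventually_ge_atTop (1:ℝ)] with R hR
    have hRpos : (0:ℝ) < R := by linarith
    have hfl : ((⌊R⌋₊ / c : ℕ) : ℝ) = (⌊R / (c:ℝ)⌋₊ : ℝ) := by
      rw [← Nat.floor_div_natCast]
    rw [hfl]
    have h1 : R / (c:ℝ) - 1 ≤ (⌊R / (c:ℝ)⌋₊ : ℝ) := (Nat.sub_one_lt_floor _).le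
    have h2 : (R / (c:ℝ) - 1)/R ≤ (⌊R / (c:ℝ)⌋₊ : ℝ) / R := by gcongr
    calc 1/(c:ℝ) - 1/R = (R / (c:ℝ) - 1)/R := by field_simp
      _ ≤ (⌊R / (c:ℝ)⌋₊ : ℝ) / R := h2
  · filter_upwards [eventually_ge_atTop (1:ℝ)] with R hR
    have hRpos : (0:ℝ) < R := by linarith
    have hfl : ((⌊R⌋₊ / c : ℕ) : ℝ) = (⌊R / (c:ℝ)⌋₊ : ℝ) := by
      rw [← Nat.floor_div_natCast]
    rw [hfl]
    have h1 : (⌊R / (c:ℝ)⌋₊ : ℝ) ≤ R / (c:ℝ) := Nat.floor_le (by positivity)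
    calc (⌊R / (c:ℝ)⌋₊ : ℝ) / R ≤ (R / (c:ℝ)) / R := by gcongr
      _ = 1 / (c:ℝ) := by
          rw [div_div, mul_comm, ← div_div, div_self hRpos.ne']

open ArithmeticFunction ArithmeticFunction.Moebius ArithmeticFunction.zeta in
noncomputable def Fterm (k : ℕ) (R : ℝ) (d : ℕ) : ℝ :=
  ((μ (d+1) * (((2 * (⌊R⌋₊ / (d+1)) + 1) ^ k * (⌊R⌋₊ / (d+1)) : ℕ) : ℤ) : ℤ) : ℝ)
    / R ^ (k+1)

open ArithmeticFunction ArithmeticFunction.Moebius ArithmeticFunction.zeta in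
lemma Fterm_eq_zero (k : ℕ) (R : ℝ) (d : ℕ) (h : ⌊R⌋₊ < d + 1) : Fterm k R d = 0 := by
  have h0 : ⌊R⌋₊ / (d+1) = 0 := Nat.div_eq_of_lt h
  simp [Fterm, h0]

open ArithmeticFunction ArithmeticFunction.Moebius ArithmeticFunction.zeta in
lemma tsum_Fterm (k : ℕ) (R : ℝ) (hR : 1 ≤ R) :
    ∑' d, Fterm k R d = (Nat.card (Bset k R) : ℝ) / R ^ (k+1) := by
  have h0 : ∀ d ∉ Finset.range ⌊R⌋₊, Fterm k R d = 0 := by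
    intro d hd
    rw [Finset.mem_range, not_lt] at hd
    exact Fterm_eq_zero k R d (by omega)
  rw [tsum_eq_sum h0]
  have h2 : ∑ d ∈ Finset.range ⌊R⌋₊, Fterm k R d
      = (((∑ d ∈ Finset.range ⌊R⌋₊,
          (μ (1+d) * (((2 * (⌊R⌋₊ / (1+d)) + 1) ^ k * (⌊R⌋₊ / (1+d)) : ℕ) : ℤ))) : ℤ) : ℝ)
        / R ^ (k+1) := by
    rw [Int.cast_sum, Finset.sum_div]
    exact Finset.sum_congr rfl fun d _ => by rw [add_comm 1 d]; rfl
  rw [h2]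
  have h3 := card_Bset_eq k R hR
  rw [← Finset.Ico_add_one_right_eq_Icc, Finset.sum_Ico_eq_sum_range] at h3
  simp only [Nat.add_sub_cancel] at h3
  rw [← h3]
  norm_num

open ArithmeticFunction ArithmeticFunction.Moebius ArithmeticFunction.zeta in
lemma Fterm_tendsto (k d : ℕ) :
    Filter.Tendsto (fun R => Fterm k R d) Filter.atTop
      (nhds (((μ (d+1) : ℤ) : ℝ) * 2 ^ k / (((d+1:ℕ)):ℝ) ^ (k+1))) := by
  have hc : (0:ℝ) < ((d+1:ℕ):ℝ) := by positivity
  have hφ := phi_tendsto (d+1) (by omega)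
  have h1R : Filter.Tendsto (fun R : ℝ => 1/R) Filter.atTop (nhds 0) := by
    simpa [one_div] using tendsto_inv_atTop_zero
  have hG : Filter.Tendsto
      (fun R : ℝ => ((μ (d+1) : ℤ) : ℝ)
        * (2 * (((⌊R⌋₊ / (d+1) : ℕ) : ℝ) / R) + 1/R) ^ k
        * (((⌊R⌋₊ / (d+1) : ℕ) : ℝ) / R)) Filter.atTop
      (nhds (((μ (d+1) : ℤ) : ℝ) * (2 * (1/((d+1:ℕ):ℝ)) + 0) ^ k * (1/((d+1:ℕ):ℝ)))) :=
    (tendsto_const_nhds.mul (((hφ.const_mul 2).add h1R).pow k)).mul hφ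
  have hval : ((μ (d+1) : ℤ) : ℝ) * (2 * (1/((d+1:ℕ):ℝ)) + 0) ^ k * (1/((d+1:ℕ):ℝ))
      = ((μ (d+1) : ℤ) : ℝ) * 2 ^ k / (((d+1:ℕ)):ℝ) ^ (k+1) := by
    rw [add_zero, mul_one_div, mul_one_div, div_pow, ← mul_div_assoc, div_div, ← pow_succ]
  rw [hval] at hG
  refine Filter.Tendsto.congr' ?_ hG
  filter_upwards [Filter.eventually_ge_atTop (1:ℝ)] with R hR
  have hRpos : (0:ℝ) < R := by linarith
  set q : ℕ := ⌊R⌋₊ / (d+1) with hq_def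
  unfold Fterm
  rw [← hq_def]
  push_cast
  rw [pow_succ]
  field_simp
  rw [mul_assoc _ (((2 * (q:ℝ) + 1) / R) ^ k), div_pow, div_mul_cancel₀ _ (pow_ne_zero k hRpos.ne')]

open ArithmeticFunction ArithmeticFunction.Moebius ArithmeticFunction.zeta in
lemma Fterm_bound (k : ℕ) (R : ℝ) (hR : 1 ≤ R) (d : ℕ) :
    |Fterm k R d| ≤ 3 ^ k / (((d+1:ℕ)):ℝ) ^ (k+1) := by
  have hc : (0:ℝ) < ((d+1:ℕ):ℝ) := by positivity
  have hRpos : (0:ℝ) < R := by linarith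
  set q : ℕ := ⌊R⌋₊ / (d+1) with hq_def
  rcases Nat.eq_zero_or_pos q with hq | hq
  · unfold Fterm
    rw [← hq_def, hq]
    simp only [mul_zero, Nat.cast_zero, Int.cast_zero, Int.cast_mul, zero_div, abs_zero]
    positivity
  · have hμ : |((μ (d+1) : ℤ) : ℝ)| ≤ 1 := by
      rw [← Int.cast_abs]
      exact_mod_cast abs_moebius_le_one
    have hqR : (q:ℝ) * ((d+1:ℕ):ℝ) ≤ R := by
      have h1 : q * (d+1) ≤ ⌊R⌋₊ := Nat.div_mul_le_self _ _
      have h2 : ((⌊R⌋₊:ℕ):ℝ) ≤ R := Nat.floor_le (by linarith)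
      calc (q:ℝ) * ((d+1:ℕ):ℝ) = ((q * (d+1) : ℕ):ℝ) := by push_cast; ring
        _ ≤ ((⌊R⌋₊:ℕ):ℝ) := by exact_mod_cast h1
        _ ≤ R := h2
    have hqle : (q:ℝ) ≤ R / ((d+1:ℕ):ℝ) := by
      rw [le_div_iff₀ hc]; exact hqR
    have h2q : (2*(q:ℝ)+1) ≤ 3 * (R / ((d+1:ℕ):ℝ)) := by
      have h1 : (1:ℝ) ≤ q := by exact_mod_cast hq
      linarith
    have hF : Fterm k R d = ((μ (d+1):ℤ):ℝ) * ((2*(q:ℝ)+1)^k * q) / R^(k+1) := by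
      unfold Fterm
      rw [← hq_def]
      push_cast
      ring
    rw [hF, abs_div, abs_of_pos (by positivity : (0:ℝ) < R^(k+1)), abs_mul,
      abs_of_nonneg (by positivity : (0:ℝ) ≤ (2*(q:ℝ)+1)^k * q)]
    have hstep : |((μ (d+1):ℤ):ℝ)| * ((2*(q:ℝ)+1)^k * (q:ℝ)) / R^(k+1)
        ≤ 1 * ((3 * (R / ((d+1:ℕ):ℝ)))^k * (R / ((d+1:ℕ):ℝ))) / R^(k+1) := by
      gcongr <;> first | exact hμ | exact h2q | exact hqle | positivity
    refine hstep.trans (le_of_eq ?_)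
    have hRne : R ≠ 0 := hRpos.ne'
    have hcne : ((d+1:ℕ):ℝ) ≠ 0 := hc.ne'
    rw [one_mul, mul_pow, div_pow, pow_succ, pow_succ]
    field_simp

set_option maxHeartbeats 1000000 in
lemma bound_summable (k : ℕ) (hk : 1 ≤ k) :
    Summable (fun d : ℕ => (3:ℝ) ^ k / (((d+1:ℕ)):ℝ) ^ (k+1)) := by
  have h : Summable (fun n : ℕ => 1 / (n:ℝ) ^ (k+1)) :=
    Real.summable_one_div_nat_pow.mpr (by omega)
  have h2 : Summable (fun n : ℕ => 1 / (((n+1:ℕ)):ℝ) ^ (k+1)) :=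
    (summable_nat_add_iff 1).mpr h
  exact (h2.mul_left ((3:ℝ)^k)).congr fun d => by rw [mul_one_div]

open ArithmeticFunction ArithmeticFunction.Moebius ArithmeticFunction.zeta in
theorem card_Bset_asymptotic (k : ℕ) (hk : 1 ≤ k) :
    Filter.Tendsto
      (fun R : ℝ => (Nat.card (Bset k R) : ℝ) * zetaVal (k + 1) / (2 ^ k * R ^ (k + 1)))
      Filter.atTop (nhds 1) := by
  have hsum := bound_summable k hk
  have hbd : ∀ᶠ R : ℝ in Filter.atTop, ∀ d : ℕ,
      ‖Fterm k R d‖ ≤ (3:ℝ)^k / (((d+1:ℕ)):ℝ)^(k+1) := by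
    filter_upwards [Filter.eventually_ge_atTop (1:ℝ)] with R hR d
    simpa [Real.norm_eq_abs] using Fterm_bound k R hR d
  have hlim := tendsto_tsum_of_dominated_convergence hsum (fun d => Fterm_tendsto k d) hbd
  set Z := zetaVal (k+1) with hZ
  set M := ∑' d : ℕ, ((μ (d+1) : ℤ):ℝ) / ((d:ℝ)+1)^(k+1) with hM
  have hg : ∑' d : ℕ, ((μ (d+1) : ℤ):ℝ) * 2^k / (((d+1:ℕ)):ℝ)^(k+1) = 2^k * M := by
    rw [hM, ← tsum_mul_left]
    refine tsum_congr fun d => ?_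
    push_cast
    ring
  rw [hg] at hlim
  have hMZ : M * Z = 1 := moebius_tsum_mul_zeta k hk
  have hmul := hlim.mul_const (Z / 2^k)
  have hval : (2^k * M) * (Z / 2^k) = 1 := by
    have h2k : ((2:ℝ)^k) ≠ 0 := by positivity
    field_simp
    linear_combination hMZ
  rw [hval] at hmul
  refine Filter.Tendsto.congr' ?_ hmul
  filter_upwards [Filter.eventually_ge_atTop (1:ℝ)] with R hR
  rw [tsum_Fterm k R hR]
  ring
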